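/- Let G be a finite group and H a subgroup of G. Suppose that for all irreducible complex representations τ_i, τ_j, τ_k of H and every g ∈ H one has (Ind_H^G(χ_{τ_i}·χ_{τ_j}))(g) · χ_{τ_k}(g) = χ_{τ_i}(g) · (Ind_H^G(χ_{τ_j}·χ_{τ_k}))(g). Then (G,H) is an admissible pair. -/

import Mathlib

open CategoryTheory
open scoped Classical

section AuxiliaryLemmas

open Module LinearMap

lemma sum_shift {M : Type*} [AddCommMonoid M] (n : ℕ) (g : ℕ → M)
    (hg : ∀ a, g (a + n) = g a) (j : ℕ) :
    ∑ k ∈ Finset.range n, g (j + k) = ∑ k ∈ Finset.range n, g k := by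
  induction j with
  | zero => simp
  | succ j ih =>
    rcases Nat.eq_zero_or_pos n with h0 | h0
    · simp [h0]
    obtain ⟨n', rfl⟩ : ∃ n', n = n' + 1 := ⟨n - 1, (Nat.succ_pred_eq_of_pos h0).symm⟩
    rw [← ih]
    rw [Finset.sum_range_succ (fun k => g (j + 1 + k)) n',
        Finset.sum_range_succ' (fun k => g (j + k)) n']
    congr 1
    · apply Finset.sum_congr rfl
      intro k _
      congr 1
      omega
    · rw [Nat.add_zero, show j + 1 + n' = j + (n' + 1) by omega, hg j, Nat.add_zero]

lemma char_inv_eq_conj {Γ : Type} [Group Γ] [Finite Γ] (τ : FDRep ℂ Γ) (x : Γ) :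
    τ.character x⁻¹ = (starRingEnd ℂ) (τ.character x) := by
  classical
  set n := orderOf x with hndef
  have hnpos : 0 < n := orderOf_pos x
  rcases eq_or_lt_of_le (Nat.one_le_iff_ne_zero.mpr hnpos.ne') with h1 | h2
  · have hx1 : x = 1 := orderOf_eq_one_iff.mp h1.symm
    subst hx1
    simp [FDRep.char_one]
  -- now 1 < n
  set f : Module.End ℂ τ := τ.ρ x with hfdef
  have hf : f ^ n = 1 := by
    rw [hfdef, ← map_pow, pow_orderOf_eq_one x, map_one]
  set ζ : ℂ := Complex.exp (2 * Real.pi * Complex.I / n) with hζdef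
  have hζ : IsPrimitiveRoot ζ n := Complex.isPrimitiveRoot_exp n hnpos.ne'
  have hζn : ζ ^ n = 1 := hζ.pow_eq_one
  have hnc : (n : ℂ) ≠ 0 := Nat.cast_ne_zero.mpr hnpos.ne'
  set gg : ℕ → ℕ → Module.End ℂ τ := fun m a => ζ ^ (m * a) • f ^ a with hgg
  have hgmul : ∀ m a b, gg m a * gg m b = gg m (a + b) := by
    intro m a b
    simp only [hgg, smul_mul_smul_comm, ← pow_add, Nat.mul_add]
  have hgper : ∀ m a, gg m (a + n) = gg m a := by
    intro m a
    show ζ ^ (m * (a + n)) • f ^ (a + n) = ζ ^ (m * a) • f ^ a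
    rw [Nat.mul_add, pow_add ζ, pow_add f, hf, mul_one, mul_comm m n, pow_mul ζ n m, hζn, one_pow,
      mul_one]
  set P : ℕ → Module.End ℂ τ := fun m => (n : ℂ)⁻¹ • ∑ j ∈ Finset.range n, gg m j with hP
  have hSS : ∀ m, (∑ j ∈ Finset.range n, gg m j) * (∑ k ∈ Finset.range n, gg m k)
      = (n : ℂ) • ∑ j ∈ Finset.range n, gg m j := by
    intro m
    rw [Finset.sum_mul_sum]
    have : ∀ j ∈ Finset.range n, ∑ k ∈ Finset.range n, gg m j * gg m k
        = ∑ k ∈ Finset.range n, gg m k := by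
      intro j _
      rw [Finset.sum_congr rfl (fun k _ => hgmul m j k)]
      exact sum_shift n (gg m) (hgper m) j
    rw [Finset.sum_congr rfl this, Finset.sum_const, Finset.card_range,
      ← Nat.cast_smul_eq_nsmul ℂ]
  have hPidem : ∀ m, P m ∘ₗ P m = P m := by
    intro m
    show P m * P m = P m
    rw [hP]
    simp only [smul_mul_smul_comm]
    rw [hSS m, smul_smul, mul_assoc, inv_mul_cancel₀ hnc, mul_one]
  have hPtrace : ∀ m, (starRingEnd ℂ) (trace ℂ τ (P m)) = trace ℂ τ (P m) := by
    intro m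
    obtain ⟨p, hp⟩ := (LinearMap.isProj_iff_isIdempotentElem (P m)).mpr (hPidem m)
    rw [hp.trace, map_natCast]
  have hQ : ∀ a, 1 ≤ a → a ≤ n → ∑ m ∈ Finset.range n, ζ ^ (m * a) • P m = f ^ (n - a) := by
    intro a ha1 ha2
    have step1 : ∀ m ∈ Finset.range n, ζ ^ (m * a) • P m
        = (n : ℂ)⁻¹ • ∑ j ∈ Finset.range n, ζ ^ (m * (a + j)) • f ^ j := by
      intro m _
      rw [hP, smul_comm, Finset.smul_sum]
      congr 1
      apply Finset.sum_congr rfl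
      intro j _
      show ζ ^ (m * a) • (ζ ^ (m * j) • f ^ j) = ζ ^ (m * (a + j)) • f ^ j
      rw [smul_smul, ← pow_add, ← Nat.mul_add]
    rw [Finset.sum_congr rfl step1, ← Finset.smul_sum, Finset.sum_comm]
    have hinner : ∀ j ∈ Finset.range n, ∑ m ∈ Finset.range n, ζ ^ (m * (a + j)) • f ^ j
        = if j = n - a then (n : ℂ) • f ^ j else 0 := by
      intro j hj
      have hjn : j < n := Finset.mem_range.mp hj
      rw [← Finset.sum_smul]
      have hsum : ∑ m ∈ Finset.range n, ζ ^ (m * (a + j)) = if j = n - a then (n : ℂ) else 0 := by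
        have hrw : ∀ m ∈ Finset.range n, ζ ^ (m * (a + j)) = (ζ ^ (a + j)) ^ m := by
          intro m _
          rw [← pow_mul, mul_comm]
        rw [Finset.sum_congr rfl hrw]
        by_cases hcase : j = n - a
        · subst hcase
          have h1 : ζ ^ (a + (n - a)) = 1 := by rw [Nat.add_sub_cancel' ha2, hζn]
          simp [h1]
        · have hne : ζ ^ (a + j) ≠ 1 := by
            intro hone
            rcases (hζ.pow_eq_one_iff_dvd _).mp hone with ⟨c, hc⟩
            have h2n : n * c < n * 2 := by omega
            have hclt : c < 2 := lt_of_mul_lt_mul_left h2n (Nat.zero_le n)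
            interval_cases c <;> omega
          have h2 : (ζ ^ (a + j)) ^ n = 1 := by
            rw [← pow_mul, mul_comm, pow_mul, hζn, one_pow]
          rw [if_neg hcase, geom_sum_eq hne, h2, sub_self, zero_div]
      rw [hsum, ite_smul, zero_smul]
    rw [Finset.sum_congr rfl hinner, Finset.sum_ite_eq' (Finset.range n)]
    rw [if_pos (Finset.mem_range.mpr (by omega : n - a < n))]
    rw [smul_smul, inv_mul_cancel₀ hnc, one_smul]
  -- assemble
  have h1n : (1 : ℕ) ≤ n - 1 := by omega
  have hQ1 : ∑ m ∈ Finset.range n, ζ ^ (m * 1) • P m = f ^ (n - 1) := hQ 1 le_rfl (by omega)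
  have hQn : ∑ m ∈ Finset.range n, ζ ^ (m * (n - 1)) • P m = f := by
    rw [hQ (n - 1) h1n (by omega), show n - (n - 1) = 1 by omega, pow_one]
  have hconjζ : (starRingEnd ℂ) ζ = ζ ^ (n - 1) := by
    have habs : ‖ζ‖ = 1 := by
      exact Complex.norm_eq_one_of_pow_eq_one hζn hnpos.ne'
    rw [← Complex.inv_eq_conj habs]
    apply inv_eq_of_mul_eq_one_right
    rw [← pow_succ' ζ (n - 1), show n - 1 + 1 = n by omega, hζn]
  have htr : ∀ (S : Finset ℕ) (c : ℕ → ℂ), trace ℂ τ (∑ m ∈ S, c m • P m)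
      = ∑ m ∈ S, c m * trace ℂ τ (P m) := by
    intro S c
    rw [map_sum]
    exact Finset.sum_congr rfl fun m _ => by rw [map_smul, smul_eq_mul]
  have key : (starRingEnd ℂ) (trace ℂ τ (f ^ (n - 1))) = trace ℂ τ f := by
    rw [← hQ1, htr, map_sum, ← hQn, htr]
    apply Finset.sum_congr rfl
    intro m _
    rw [map_mul, hPtrace m, map_pow, hconjζ, ← pow_mul, mul_one, mul_comm (n-1) m]
  have hxinv : x⁻¹ = x ^ (n - 1) := by
    symm
    apply eq_inv_of_mul_eq_one_left
    rw [← pow_succ x (n - 1), show n - 1 + 1 = n by omega, pow_orderOf_eq_one]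
  have hchar : τ.character x⁻¹ = trace ℂ τ (f ^ (n - 1)) := by
    rw [hxinv]
    show trace ℂ τ (τ.ρ (x ^ (n - 1))) = _
    rw [map_pow]
  have hcharx : τ.character x = trace ℂ τ f := rfl
  rw [hchar, hcharx, ← key, Complex.conj_conj]


variable {Γ : Type} [Group Γ]

/-- The subrepresentation on an invariant submodule. -/
noncomputable def invariantSub (V : FDRep ℂ Γ) (p : Submodule ℂ V)
    (hp : ∀ (γ : Γ) (x : V), x ∈ p → V.ρ γ x ∈ p) : FDRep ℂ Γ :=
  FDRep.of
    { toFun := fun γ => (V.ρ γ).restrict (fun x hx => hp γ x hx)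
      map_one' := by
        ext v
        simp [LinearMap.restrict_apply]
      map_mul' := by
        intro γ₁ γ₂
        ext v
        simp [LinearMap.restrict_apply] }

noncomputable def inclHom (V : FDRep ℂ Γ) (p : Submodule ℂ V)
    (hp : ∀ (γ : Γ) (x : V), x ∈ p → V.ρ γ x ∈ p) : invariantSub V p hp ⟶ V where
  hom := FGModuleCat.ofHom p.subtype
  comm := by
    intro γ
    ext v
    rfl

lemma hom_ext' {V W : FDRep ℂ Γ} {f g : V ⟶ W} (h : ∀ v : V, f.hom v = g.hom v) : f = g := by
  apply Action.Hom.ext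
  exact ConcreteCategory.hom_ext _ _ h

lemma hom_comp_apply {U V W : FDRep ℂ Γ} (f : U ⟶ V) (g : V ⟶ W) (u : U) :
    (f ≫ g).hom u = g.hom (f.hom u) := rfl

lemma zero_hom_apply {V W : FDRep ℂ Γ} (v : V) : (0 : V ⟶ W).hom v = 0 := rfl

lemma equivariant_apply {V W : FDRep ℂ Γ} (f : V ⟶ W) (γ : Γ) (v : V) :
    f.hom (V.ρ γ v) = W.ρ γ (f.hom v) := by
  have := f.comm γ
  have h2 := congrArg (fun (u : V.V ⟶ W.V) => u v) this
  exact h2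

lemma submodule_trivial_of_simple (V : FDRep ℂ Γ) (hV : Simple V) (p : Submodule ℂ V)
    (hp : ∀ (γ : Γ) (x : V), x ∈ p → V.ρ γ x ∈ p) : p = ⊥ ∨ p = ⊤ := by
  by_cases hbot : p = ⊥
  · exact Or.inl hbot
  right
  set ι := inclHom V p hp with hι
  have hmono : Mono ι := by
    constructor
    intro Z u v huv
    apply hom_ext'
    intro z
    apply Subtype.ext
    exact congrArg (fun (w : Z ⟶ V) => w.hom z) huv
  obtain ⟨x, hxp, hxne⟩ := Submodule.exists_mem_ne_zero_of_ne_bot hbot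
  have hne : ι ≠ 0 := by
    intro h0
    apply hxne
    have : ι.hom ⟨x, hxp⟩ = 0 := by rw [h0]; rfl
    exact this
  have hiso : IsIso ι := (Simple.mono_isIso_iff_nonzero (X := V) ι).mpr hne
  rw [Submodule.eq_top_iff']
  intro v
  have hsurj : ι.hom ((inv ι).hom v) = v := by
    rw [← hom_comp_apply (inv ι) ι v, IsIso.inv_hom_id]
    rfl
  have hmem : ι.hom ((inv ι).hom v) ∈ p := ((inv ι).hom v).2
  rwa [hsurj] at hmem

lemma simple_of_invariants (V : FDRep ℂ Γ) (hnt : Nontrivial V)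
    (h : ∀ p : Submodule ℂ V, (∀ (γ : Γ) (x : V), x ∈ p → V.ρ γ x ∈ p) → p = ⊥ ∨ p = ⊤) :
    Simple V := by
  constructor
  intro Y f hmono
  constructor
  · intro hiso h0
    obtain ⟨v, hv⟩ := exists_ne (0 : V)
    apply hv
    have h1 : (inv f ≫ f).hom v = v := by rw [IsIso.inv_hom_id]; rfl
    have hf0 : ∀ y : Y, f.hom y = 0 := fun y => by rw [h0]; rfl
    rw [← h1, hom_comp_apply, hf0]
  · intro hfne
    -- injectivity
    have hinj : Function.Injective f.hom := by
      set K : Submodule ℂ Y := LinearMap.ker f.hom.hom.hom with hK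
      have hKinv : ∀ (γ : Γ) (y : Y), y ∈ K → Y.ρ γ y ∈ K := by
        intro γ y hy
        have heq : f.hom (Y.ρ γ y) = V.ρ γ (f.hom y) := equivariant_apply f γ y
        have hy0 : f.hom y = 0 := hy
        show f.hom (Y.ρ γ y) = 0
        rw [heq, hy0, map_zero]
      have hcomp : inclHom Y K hKinv ≫ f = (0 : invariantSub Y K hKinv ⟶ V) := by
        apply hom_ext'
        intro z
        rw [hom_comp_apply, zero_hom_apply]
        exact z.2
      have hz : inclHom Y K hKinv = 0 := by
        have h2 : inclHom Y K hKinv ≫ f = 0 ≫ f := by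
          rw [hcomp, Limits.zero_comp]
        exact Mono.right_cancellation _ _ h2
      have hKbot : K = ⊥ := by
        rw [Submodule.eq_bot_iff]
        intro y hy
        have : (inclHom Y K hKinv).hom ⟨y, hy⟩ = y := rfl
        have h3 := congrArg (fun (w : invariantSub Y K hKinv ⟶ Y) => w.hom ⟨y, hy⟩) hz
        exact this.symm.trans (h3.trans (zero_hom_apply _))
      intro a b hab
      have : a - b ∈ K := by
        simp only [hK, LinearMap.mem_ker, map_sub, hab, sub_self]
        exact sub_eq_zero.mpr hab
      rw [hKbot, Submodule.mem_bot] at this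
      exact sub_eq_zero.mp this
    -- surjectivity
    have hsurj : Function.Surjective f.hom := by
      set R : Submodule ℂ V := LinearMap.range f.hom.hom.hom with hR
      have hRinv : ∀ (γ : Γ) (x : V), x ∈ R → V.ρ γ x ∈ R := by
        rintro γ x ⟨y, rfl⟩
        exact ⟨Y.ρ γ y, equivariant_apply f γ y⟩
      rcases h R hRinv with hb | ht
      · exfalso
        apply hfne
        apply hom_ext'
        intro y
        have : f.hom y ∈ R := ⟨y, rfl⟩
        rw [hb, Submodule.mem_bot] at this
        rw [this, zero_hom_apply]
      · intro v
        have : v ∈ R := by rw [ht]; trivial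
        exact this
    -- build inverse
    have hbij : Function.Bijective f.hom := ⟨hinj, hsurj⟩
    let e : Y.V ≃ₗ[ℂ] V.V := LinearEquiv.ofBijective f.hom.hom.hom hbij
    have : IsIso f.hom := by
      refine ⟨FGModuleCat.ofHom (e.symm : V.V →ₗ[ℂ] Y.V), ?_, ?_⟩
      · apply ConcreteCategory.hom_ext
        intro y
        exact e.symm_apply_apply y
      · apply ConcreteCategory.hom_ext
        intro v
        exact e.apply_symm_apply v
    exact Action.isIso_of_hom_isIso f

noncomputable def trivRep : FDRep ℂ Γ := FDRep.of (Representation.trivial ℂ (G := Γ) (V := ℂ))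

lemma trivRep_char (γ : Γ) : (trivRep (Γ := Γ)).character γ = 1 := by
  have h : (trivRep (Γ := Γ)).character γ = LinearMap.trace ℂ ℂ (LinearMap.id) := rfl
  rw [h, LinearMap.trace_id, Module.finrank_self, Nat.cast_one]

lemma trivRep_simple : Simple (trivRep (Γ := Γ)) := by
  apply simple_of_invariants
  · exact inferInstanceAs (Nontrivial ℂ)
  · intro p _
    exact Ideal.eq_bot_or_top (K := ℂ) p

noncomputable def dualRep (V : FDRep ℂ Γ) : FDRep ℂ Γ := FDRep.of (Representation.dual V.ρ)

lemma dualRep_simple (V : FDRep ℂ Γ) (hV : Simple V) : Simple (dualRep V) := by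
  have hnt : Nontrivial V := by
    rcases subsingleton_or_nontrivial V with hs | hn
    · exfalso
      apply CategoryTheory.id_nonzero V
      apply hom_ext'
      intro v
      exact @Subsingleton.elim _ hs _ _
    · exact hn
  have hfr : 0 < finrank ℂ V := finrank_pos
  apply simple_of_invariants
  · have hdfr : 0 < finrank ℂ (Module.Dual ℂ V) := by
      rw [Subspace.dual_finrank_eq]
      exact hfr
    exact (Module.finrank_pos_iff (R := ℂ) (M := Module.Dual ℂ V)).mp hdfr
  · intro p hp
    have hp' : ∀ (γ : Γ) (φ : Module.Dual ℂ V), φ ∈ p → Representation.dual V.ρ γ φ ∈ p := hp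
    let p' : Submodule ℂ (Module.Dual ℂ V) := p
    have hqinv : ∀ (γ : Γ) (x : V),
        x ∈ p'.dualCoannihilator → V.ρ γ x ∈ p'.dualCoannihilator := by
      intro γ x hx
      rw [Submodule.mem_dualCoannihilator] at hx ⊢
      intro φ hφ
      have hmem : Representation.dual V.ρ γ⁻¹ φ ∈ p' := hp' γ⁻¹ φ hφ
      have h2 := hx _ hmem
      rw [Representation.dual_apply] at h2
      simpa [Module.Dual.transpose_apply] using h2
    rcases submodule_trivial_of_simple V hV p'.dualCoannihilator hqinv with hb | ht
    · right
      have hfin := Subspace.finrank_add_finrank_dualCoannihilator_eq p'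
      rw [hb, finrank_bot, Nat.add_zero] at hfin
      have : finrank ℂ p' = finrank ℂ (Module.Dual ℂ V) := by
        rw [hfin, Subspace.dual_finrank_eq]
      exact Submodule.eq_top_of_finrank_eq this
    · left
      rw [Submodule.eq_bot_iff]
      intro φ hφ
      apply LinearMap.ext
      intro v
      have hv : v ∈ p'.dualCoannihilator := by rw [ht]; trivial
      rw [Submodule.mem_dualCoannihilator] at hv
      exact hv φ hφ

lemma dualRep_char (V : FDRep ℂ Γ) (γ : Γ) :
    (dualRep V).character γ = V.character γ⁻¹ := FDRep.char_dual V γ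


end AuxiliaryLemmas

/-- The pair `(G, H)` is *admissible* if for every irreducible complex representation `τ`
of `H` with character `χ_τ`, every `g ∈ H` and every `s ∈ G` with `s g s⁻¹ ∈ H`, one has
`χ_τ(s g s⁻¹) = χ_τ(g)`. -/
def IsAdmissiblePair (G : Type) [Group G] (H : Subgroup G) : Prop :=
  ∀ (τ : FDRep ℂ H), Simple τ →
    ∀ (g : H) (s : G) (hs : s * (g : G) * s⁻¹ ∈ H),
      τ.character ⟨s * (g : G) * s⁻¹, hs⟩ = τ.character g

/-- The class function on `G` induced from a class function `χ` on the subgroup `H`: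
`(Ind_H^G χ)(g) = (1/|H|) · Σ_{s ∈ G, s g s⁻¹ ∈ H} χ(s g s⁻¹)`. -/
noncomputable def indClass {G : Type} [Group G] [Fintype G] (H : Subgroup G)
    (χ : H → ℂ) (g : G) : ℂ :=
  (Nat.card H : ℂ)⁻¹ *
    ∑ s : G, if hs : s * g * s⁻¹ ∈ H then χ ⟨s * g * s⁻¹, hs⟩ else 0


/-- If the associativity identity (A4) holds for all irreducible representations of `H`,
then `(G,H)` is an admissible pair. -/
theorem isAdmissiblePair_of_assoc (G : Type) [Group G] [Fintype G] (H : Subgroup G)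
    (hassoc : ∀ (τi τj τk : FDRep ℂ H), Simple τi → Simple τj → Simple τk →
      ∀ g : H,
        indClass H (fun x => τi.character x * τj.character x) (g : G) * τk.character g
          = τi.character g *
              indClass H (fun x => τj.character x * τk.character x) (g : G)) :
    IsAdmissiblePair G H := by
  intro τ hτ g s hs
  set T : FDRep ℂ H := trivRep with hT
  set D : FDRep ℂ H := dualRep τ with hD
  have hTs : Simple T := trivRep_simple
  have hDs : Simple D := dualRep_simple τ hτ
  have hTchar : ∀ x : H, T.character x = 1 := fun x => trivRep_char x
  have hDchar : ∀ x : H, D.character x = (starRingEnd ℂ) (τ.character x) := by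
    intro x
    rw [hD, dualRep_char, char_inv_eq_conj]
  set MM : (H → ℂ) → ℂ :=
    fun β => ∑ t : G, if ht : t * (g : G) * t⁻¹ ∈ H then β ⟨t * (g : G) * t⁻¹, ht⟩ else 0
    with hMM
  have hind : ∀ β, indClass H β (g : G) = (Nat.card H : ℂ)⁻¹ * MM β := fun β => rfl
  have hu0 : ((Nat.card H : ℂ)⁻¹ : ℂ) ≠ 0 := by
    apply inv_ne_zero
    have : 0 < Nat.card H := Nat.card_pos
    exact_mod_cast this.ne'
  -- function simplifications
  have eτT : (fun x : H => τ.character x * T.character x) = fun x : H => τ.character x :=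
    funext fun x => by rw [hTchar, mul_one]
  have eDT : (fun x : H => D.character x * T.character x) = fun x : H => D.character x :=
    funext fun x => by rw [hTchar, mul_one]
  have eTT : (fun x : H => T.character x * T.character x) = fun _ : H => (1 : ℂ) :=
    funext fun x => by rw [hTchar, mul_one]
  -- A3 : MM χτ = χτ(g) * MM 1
  have A3 : MM (fun x : H => τ.character x) = τ.character g * MM (fun _ : H => (1 : ℂ)) := by
    have h := hassoc τ T T hτ hTs hTs g
    rw [eτT, eTT, hTchar, mul_one, hind, hind, mul_left_comm] at h
    exact mul_left_cancel₀ hu0 h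
  -- A2 : MM χD = χD(g) * MM 1
  have A2 : MM (fun x : H => D.character x) = D.character g * MM (fun _ : H => (1 : ℂ)) := by
    have h := hassoc D T T hDs hTs hTs g
    rw [eDT, eTT, hTchar, mul_one, hind, hind, mul_left_comm] at h
    exact mul_left_cancel₀ hu0 h
  -- A1 : MM (χτ·χD) = χτ(g) * (χD(g) * MM 1)
  have A1 : MM (fun x : H => τ.character x * D.character x)
      = τ.character g * (D.character g * MM (fun _ : H => (1 : ℂ))) := by
    have h := hassoc τ D T hτ hDs hTs g
    rw [eDT, hTchar, mul_one, hind, hind, mul_left_comm] at h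
    have h2 := mul_left_cancel₀ hu0 h
    rw [h2, A2]
  -- the nonnegative sum
  set F : G → ℂ :=
    fun t => if ht : t * (g : G) * t⁻¹ ∈ H then
      τ.character ⟨t * (g : G) * t⁻¹, ht⟩ - τ.character g else 0 with hF
  have expand : ∀ t : G, F t * (starRingEnd ℂ) (F t) =
      (if ht : t * (g : G) * t⁻¹ ∈ H then
          τ.character ⟨t * (g : G) * t⁻¹, ht⟩ * D.character ⟨t * (g : G) * t⁻¹, ht⟩ else 0)
        - τ.character g * (if ht : t * (g : G) * t⁻¹ ∈ H then
            D.character ⟨t * (g : G) * t⁻¹, ht⟩ else 0)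
        - D.character g * (if ht : t * (g : G) * t⁻¹ ∈ H then
            τ.character ⟨t * (g : G) * t⁻¹, ht⟩ else 0)
        + τ.character g * D.character g * (if t * (g : G) * t⁻¹ ∈ H then (1 : ℂ) else 0) := by
    intro t
    by_cases ht : t * (g : G) * t⁻¹ ∈ H
    · rw [hF]
      simp only [dif_pos ht, if_pos ht]
      rw [map_sub, ← hDchar, ← hDchar]
      ring
    · rw [hF]
      simp only [dif_neg ht, if_neg ht]
      rw [map_zero, mul_zero, mul_zero, mul_zero, mul_zero]
      ring
  have hFsum : ∑ t : G, F t * (starRingEnd ℂ) (F t) = 0 := by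
    rw [Finset.sum_congr rfl (fun t _ => expand t)]
    rw [Finset.sum_add_distrib, Finset.sum_sub_distrib, Finset.sum_sub_distrib,
      ← Finset.mul_sum, ← Finset.mul_sum, ← Finset.mul_sum]
    have hone : ∑ t : G, (if t * (g : G) * t⁻¹ ∈ H then (1 : ℂ) else 0)
        = MM (fun _ : H => (1 : ℂ)) := by
      rw [hMM]
      apply Finset.sum_congr rfl
      intro t _
      by_cases ht : t * (g : G) * t⁻¹ ∈ H
      · rw [if_pos ht, dif_pos ht]
      · rw [if_neg ht, dif_neg ht]
    rw [hone]
    have h1 : ∑ t : G, (if ht : t * (g : G) * t⁻¹ ∈ H then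
        τ.character ⟨t * (g : G) * t⁻¹, ht⟩ * D.character ⟨t * (g : G) * t⁻¹, ht⟩ else 0)
        = MM (fun x : H => τ.character x * D.character x) := rfl
    have h2 : ∑ t : G, (if ht : t * (g : G) * t⁻¹ ∈ H then
        D.character ⟨t * (g : G) * t⁻¹, ht⟩ else 0) = MM (fun x : H => D.character x) := rfl
    have h3 : ∑ t : G, (if ht : t * (g : G) * t⁻¹ ∈ H then
        τ.character ⟨t * (g : G) * t⁻¹, ht⟩ else 0) = MM (fun x : H => τ.character x) := rfl
    rw [h1, h2, h3, A1, A2, A3]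
    ring
  have hns : ∑ t : G, Complex.normSq (F t) = 0 := by
    have hc : ((∑ t : G, Complex.normSq (F t) : ℝ) : ℂ) = 0 := by
      push_cast
      rw [← hFsum]
      apply Finset.sum_congr rfl
      intro t _
      exact (Complex.mul_conj (F t)).symm
    exact_mod_cast hc
  have hFs : F s = 0 := by
    have := (Finset.sum_eq_zero_iff_of_nonneg
      (fun t _ => Complex.normSq_nonneg (F t))).mp hns s (Finset.mem_univ s)
    exact Complex.normSq_eq_zero.mp this
  rw [hF] at hFs
  simp only [dif_pos hs] at hFs
  exact sub_eq_zero.mp hFs
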